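/- In the uncertainty map M_n used for the QBF reduction, for every sequence of actions σ = A_1...A_i with 1 ≤ i ≤ n, where each A_k is either a_k or ā_k, the updated uncertainty set is U|^σ = {x_0, X_1, ..., X_i}, where X_k = x_k if A_k = a_k and X_k = x̄_k if A_k = ā_k, for each 1 ≤ k ≤ i. -/

import Mathlib

mutual
/-- Formulas of EPDL. -/
inductive EForm (P A : Type) : Type
  | top : EForm P A
  | atom : P → EForm P A
  | neg : EForm P A → EForm P A
  | and : EForm P A → EForm P A → EForm P A
  | box : EProg P A → EForm P A → EForm P A
  | know : EForm P A → EForm P A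
/-- Programs of EPDL. -/
inductive EProg (P A : Type) : Type
  | act : A → EProg P A
  | test : EForm P A → EProg P A
  | seq : EProg P A → EProg P A → EProg P A
  | choice : EProg P A → EProg P A → EProg P A
  | star : EProg P A → EProg P A
end

namespace EForm
variable {P A : Type}
/-- φ ∨ ψ := ¬(¬φ ∧ ¬ψ) -/
def or (φ ψ : EForm P A) : EForm P A := neg (and (neg φ) (neg ψ))
/-- φ → ψ := ¬φ ∨ ψ -/
def imp (φ ψ : EForm P A) : EForm P A := or (neg φ) ψ
def iff (φ ψ : EForm P A) : EForm P A := and (imp φ ψ) (imp ψ φ)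
/-- ⟨π⟩φ := ¬[π]¬φ -/
def dia (π : EProg P A) (φ : EForm P A) : EForm P A := neg (box π (neg φ))
/-- ⦗π⦘φ := [π]φ ∧ ⟨π⟩φ -/
def bbox (π : EProg P A) (φ : EForm P A) : EForm P A := and (box π φ) (dia π φ)
/-- K̂φ := ¬K¬φ -/
def hatK (φ : EForm P A) : EForm P A := neg (know (neg φ))
end EForm

/-- A Kripke model with labelled relations. -/
structure Kripke (P A : Type) where
  S : Type
  R : A → S → S → Prop
  V : S → P → Prop

namespace Kripke
variable {P A : Type}
/-- U|^a -/
def img (N : Kripke P A) (a : A) (U : Set N.S) : Set N.S := {t | ∃ u ∈ U, N.R a u t}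
/-- Iterated update U|^σ along a sequence of actions. -/
def updU (N : Kripke P A) : Set N.S → List A → Set N.S
  | U, [] => U
  | U, a :: σ => N.updU (N.img a U) σ
end Kripke

mutual
/-- Truth of an EPDL formula at a pointed uncertainty map, represented by the
(fixed) Kripke model `N`, an uncertainty set `U` and a state `s`. -/
def eSat {P A : Type} (N : Kripke P A) : Set N.S → N.S → EForm P A → Prop
  | _, _, .top => True
  | _, s, .atom p => N.V s p
  | U, s, .neg φ => ¬ eSat N U s φ
  | U, s, .and φ ψ => eSat N U s φ ∧ eSat N U s ψ
  | U, s, .box π φ => ∀ c : Set N.S × N.S, eRel N π (U, s) c → eSat N c.1 c.2 φ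
  | U, _, .know φ => ∀ u ∈ U, eSat N U u φ
/-- The relation ⟦π⟧ between pointed uncertainty maps (over a fixed Kripke model
`N`, a pointed uncertainty map is a pair of an uncertainty set and a state). -/
def eRel {P A : Type} (N : Kripke P A) : EProg P A → Set N.S × N.S → Set N.S × N.S → Prop
  | .act a, c, c' => c'.1 = N.img a c.1 ∧ N.R a c.2 c'.2
  | .test ψ, c, c' => c' = c ∧ eSat N c.1 c.2 ψ
  | .seq π₁ π₂, c, c' => ∃ d, eRel N π₁ c d ∧ eRel N π₂ d c'
  | .choice π₁ π₂, c, c' => eRel N π₁ c c' ∨ eRel N π₂ c c'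
  | .star π, c, c' => Relation.ReflTransGen (fun x y => eRel N π x y) c c'
end

/-- Validity: truth at every pointed uncertainty map. -/
def eValid {P A : Type} (φ : EForm P A) : Prop :=
  ∀ (N : Kripke P A) (U : Set N.S), U.Nonempty → ∀ s ∈ U, eSat N U s φ

/-- Proposition letters for the QBF reduction: `(true, k)` is p_{k+1} and
`(false, k)` is q_{k+1}. -/
abbrev QP : Type := Bool × ℕ

/-- Action symbols for the QBF reduction: `(true, k)` is a_{k+1} and
`(false, k)` is ā_{k+1}. -/
abbrev QA : Type := Bool × ℕ

/-- States of M_n: `none` is x_0, `some (true, k)` is x_{k+1} and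
`some (false, k)` is x̄_{k+1}, where k+1 ≤ n. -/
def QS (n : ℕ) : Type := {v : Option (Bool × ℕ) // ∀ b k, v = some (b, k) → k < n}

/-- The level of a state: x_0 has level 0, x_i and x̄_i have level i. -/
def levelOf {n : ℕ} (s : QS n) : ℕ :=
  match s.val with
  | none => 0
  | some (_, k) => k + 1

/-- The uncertainty map M_n (its underlying Kripke model): the action a_{k+1}
(resp. ā_{k+1}), i.e. `(true,k)` (resp. `(false,k)`), is the identity on all
states together with the edges from the two states of level k to x_{k+1}
(resp. x̄_{k+1}); p_{k+1} holds exactly at x_{k+1} and q_{k+1} exactly at x̄_{k+1}. -/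
def MnK (n : ℕ) : Kripke QP QA where
  S := QS n
  R := fun a s t => s = t ∨ (levelOf s = a.2 ∧ t.val = some (a.1, a.2))
  V := fun s p => s.val = some p

/-- The initial uncertainty set U = {x_0}. -/
def Un (n : ℕ) : Set (QS n) := {s | s.val = none}

/-- The initial state x_0. -/
def x0 (n : ℕ) : QS n := ⟨none, fun _ _ h => by cases h⟩

lemma updU_append {P A : Type} (N : Kripke P A) (U : Set N.S) (σ τ : List A) :
    N.updU U (σ ++ τ) = N.updU (N.updU U σ) τ := by
  induction σ generalizing U with
  | nil => rfl
  | cons a σ ih => simp [Kripke.updU, ih]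

lemma qbf_aux (n i : ℕ) (c : ℕ → Bool) (h2 : i ≤ n) :
    (MnK n).updU (Un n) ((List.range i).map fun k => ((c k, k) : QA)) =
      {s : QS n | s.val = none ∨ ∃ k < i, s.val = some (c k, k)} := by
  induction i with
  | zero =>
    ext s
    simp [Kripke.updU, Un]
  | succ i ih =>
    erw [List.range_succ, List.map_append, updU_append, ih (Nat.le_of_succ_le h2)]
    ext s
    simp only [Kripke.updU, Kripke.img, MnK, Set.mem_setOf_eq]
    constructor
    · rintro ⟨u, hu, hR⟩
      rcases hR with rfl | ⟨_, hs⟩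
      · rcases hu with h | ⟨k, hk, h⟩
        · exact Or.inl h
        · exact Or.inr ⟨k, Nat.lt_succ_of_lt hk, h⟩
      · exact Or.inr ⟨i, Nat.lt_succ_self i, hs⟩
    · rintro (h | ⟨k, hk, h⟩)
      · exact ⟨s, Or.inl h, Or.inl rfl⟩
      · rcases Nat.lt_succ_iff_lt_or_eq.mp hk with hk | rfl
        · exact ⟨s, Or.inr ⟨k, hk, h⟩, Or.inl rfl⟩
        · -- need a witness of level k in the old set
          cases k with
          | zero => exact ⟨x0 n, Or.inl rfl, Or.inr ⟨rfl, h⟩⟩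
          | succ m =>
            refine ⟨⟨some (c m, m), ?_⟩, Or.inr ⟨m, Nat.lt_succ_self m, rfl⟩,
              Or.inr ⟨rfl, h⟩⟩
            rintro b j hj
            cases hj
            omega

/-- In the uncertainty map M_n used for the QBF reduction, for every
sequence of actions σ = A_1...A_i with 1 ≤ i ≤ n, where each A_k is either a_k or
ā_k (here A_k is encoded as `(c (k-1), k-1)` for a choice function c), the updated
uncertainty set is U|^σ = {x_0, X_1, ..., X_i}, where X_k = x_k if A_k = a_k and
X_k = x̄_k if A_k = ā_k. -/
theorem qbf_uncertainty_update (n i : ℕ) (c : ℕ → Bool) (h1 : 1 ≤ i) (h2 : i ≤ n) :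
    (MnK n).updU (Un n) ((List.range i).map fun k => ((c k, k) : QA)) =
      {s : QS n | s.val = none ∨ ∃ k < i, s.val = some (c k, k)} := by
  exact qbf_aux n i c h2
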